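/- For every f ∈ B₂(X) with Barron norm γ₂(f), and every m ∈ ℕ, there exists a two-layer network f(x;θ̃) = ∑_{k=1}^m a_k σ(⟨w_k, x⟩) of width m such that E_x[(f(x) − f(x;θ̃))²] ≤ 3γ₂²(f)/m and the path norm satisfies ‖θ̃‖_P = ∑_{k=1}^m |a_k|‖w_k‖₁ ≤ 2γ₂(f). -/

import Mathlib

open MeasureTheory
open scoped ENNReal NNReal

/-- The unit ℓ¹ sphere `S^d = {w : ‖w‖₁ = 1}` in ℝ^d. -/
def Sphere1 (d : ℕ) : Type := {w : Fin d → ℝ // ∑ i, |w i| = 1}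

instance (d : ℕ) : MeasurableSpace (Sphere1 d) := Subtype.instMeasurableSpace

/-- The cube `X = [-1,1]^d`. -/
def Cube (d : ℕ) : Type := {x : Fin d → ℝ // ∀ i, |x i| ≤ 1}

instance (d : ℕ) : MeasurableSpace (Cube d) := Subtype.instMeasurableSpace

private lemma prod_two {β : Type*} [CommMonoid β] {m : ℕ} (j k : Fin m) (hjk : j ≠ k)
    (h : Fin m → β) (hother : ∀ i, i ≠ j → i ≠ k → h i = 1) : ∏ i, h i = h j * h k := by
  classical
  rw [← Finset.mul_prod_erase Finset.univ h (Finset.mem_univ j),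
    ← Finset.mul_prod_erase _ h (Finset.mem_erase.mpr ⟨Ne.symm hjk, Finset.mem_univ k⟩),
    Finset.prod_eq_one, mul_one]
  intro i hi
  simp only [Finset.mem_erase] at hi
  exact hother i hi.2.1 hi.1

private lemma prod_one {β : Type*} [CommMonoid β] {m : ℕ} (k : Fin m)
    (h : Fin m → β) (hother : ∀ i, i ≠ k → h i = 1) : ∏ i, h i = h k := by
  classical
  rw [← Finset.mul_prod_erase Finset.univ h (Finset.mem_univ k), Finset.prod_eq_one, mul_one]
  intro i hi
  simp only [Finset.mem_erase] at hi
  exact hother i hi.1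

section Aux

variable {α : Type*} [MeasureSpace α] [IsProbabilityMeasure (volume : Measure α)]
  {m : ℕ}

private lemma aux_eval_integrable (φ : α → ℝ) (hφ : Integrable φ) (k : Fin m) :
    Integrable (fun W : Fin m → α => φ (W k)) := by
  classical
  have h : (fun W : Fin m → α => φ (W k))
      = fun W => ∏ i, (fun i : Fin m => if i = k then φ else fun _ => (1:ℝ)) i (W i) := by
    funext W
    rw [prod_one k _ (fun i hi => by simp [hi])]
    simp
  rw [h]
  refine Integrable.fintype_prod (fun i => ?_)
  by_cases hik : i = k
  · rw [if_pos hik]; exact hφ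
  · simp [hik, integrable_const]

private lemma aux_eval_integral (φ : α → ℝ) (k : Fin m) :
    ∫ W : Fin m → α, φ (W k) = ∫ w, φ w := by
  classical
  have h : (fun W : Fin m → α => φ (W k))
      = fun W => ∏ i, (fun i : Fin m => if i = k then φ else fun _ => (1:ℝ)) i (W i) := by
    funext W
    rw [prod_one k _ (fun i hi => by simp [hi])]
    simp
  rw [h, integral_fintype_prod_volume_eq_prod,
    prod_one k _ (fun i hi => by simp [hi, measure_univ])]
  simp

private lemma aux_pair_integrable (φ ψ : α → ℝ) (hφ : Integrable φ) (hψ : Integrable ψ)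
    {j k : Fin m} (hjk : j ≠ k) :
    Integrable (fun W : Fin m → α => φ (W j) * ψ (W k)) := by
  classical
  have h : (fun W : Fin m → α => φ (W j) * ψ (W k))
      = fun W => ∏ i, (fun i : Fin m =>
          if i = j then φ else if i = k then ψ else fun _ => (1:ℝ)) i (W i) := by
    funext W
    rw [prod_two j k hjk _ (fun i h1 h2 => by simp [h1, h2])]
    simp [hjk, Ne.symm hjk]
  rw [h]
  refine Integrable.fintype_prod (fun i => ?_)
  by_cases hij : i = j
  · rw [if_pos hij]; exact hφ
  · by_cases hik : i = k
    · rw [if_neg hij, if_pos hik]; exact hψ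
    · simp [hij, hik, integrable_const]

private lemma aux_pair_integral (φ ψ : α → ℝ) {j k : Fin m} (hjk : j ≠ k) :
    ∫ W : Fin m → α, φ (W j) * ψ (W k) = (∫ w, φ w) * ∫ w, ψ w := by
  classical
  have h : (fun W : Fin m → α => φ (W j) * ψ (W k))
      = fun W => ∏ i, (fun i : Fin m =>
          if i = j then φ else if i = k then ψ else fun _ => (1:ℝ)) i (W i) := by
    funext W
    rw [prod_two j k hjk _ (fun i h1 h2 => by simp [h1, h2])]
    simp [hjk, Ne.symm hjk]
  rw [h, integral_fintype_prod_volume_eq_prod,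
    prod_two j k hjk _ (fun i h1 h2 => by simp [h1, h2, measure_univ])]
  simp [hjk, Ne.symm hjk]

end Aux

section Wrappers

variable {d : ℕ} (π : Measure (Sphere1 d)) [IsProbabilityMeasure π] {m : ℕ}

private lemma pev_int (φ : Sphere1 d → ℝ) (hφ : Integrable φ π) (k : Fin m) :
    Integrable (fun W : Fin m → Sphere1 d => φ (W k)) (Measure.pi fun _ => π) := by
  letI : MeasureSpace (Sphere1 d) := { toMeasurableSpace := inferInstance, volume := π }
  haveI : IsProbabilityMeasure (volume : Measure (Sphere1 d)) := ‹IsProbabilityMeasure π›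
  exact aux_eval_integrable φ hφ k

private lemma pev_eq (φ : Sphere1 d → ℝ) (k : Fin m) :
    ∫ W : Fin m → Sphere1 d, φ (W k) ∂(Measure.pi fun _ => π) = ∫ w, φ w ∂π := by
  letI : MeasureSpace (Sphere1 d) := { toMeasurableSpace := inferInstance, volume := π }
  haveI : IsProbabilityMeasure (volume : Measure (Sphere1 d)) := ‹IsProbabilityMeasure π›
  exact aux_eval_integral φ k

private lemma ppair_int (φ ψ : Sphere1 d → ℝ) (hφ : Integrable φ π) (hψ : Integrable ψ π)
    {j k : Fin m} (hjk : j ≠ k) :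
    Integrable (fun W : Fin m → Sphere1 d => φ (W j) * ψ (W k)) (Measure.pi fun _ => π) := by
  letI : MeasureSpace (Sphere1 d) := { toMeasurableSpace := inferInstance, volume := π }
  haveI : IsProbabilityMeasure (volume : Measure (Sphere1 d)) := ‹IsProbabilityMeasure π›
  exact aux_pair_integrable φ ψ hφ hψ hjk

private lemma ppair_eq (φ ψ : Sphere1 d → ℝ) {j k : Fin m} (hjk : j ≠ k) :
    ∫ W : Fin m → Sphere1 d, φ (W j) * ψ (W k) ∂(Measure.pi fun _ => π)
      = (∫ w, φ w ∂π) * ∫ w, ψ w ∂π := by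
  letI : MeasureSpace (Sphere1 d) := { toMeasurableSpace := inferInstance, volume := π }
  haveI : IsProbabilityMeasure (volume : Measure (Sphere1 d)) := ‹IsProbabilityMeasure π›
  exact aux_pair_integral φ ψ hjk

end Wrappers

/-- Approximation theorem: for `f ∈ B₂(X)` with an attained Barron norm `γ₂(f) = γ`
(i.e. a representation `f(x) = ∫ a(w)σ(⟨w,x⟩)dπ(w)` with `∫ a² dπ = γ²`), and any
width `m`, there is a two-layer network `∑_k a_k σ(⟨w_k,x⟩)` with
`E_x (f(x) − f(x;θ̃))² ≤ 3γ²/m` and path norm `∑_k |a_k|‖w_k‖₁ ≤ 2γ`. -/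
theorem stmt_3 (d m : ℕ) (hm : 0 < m) (σ : ℝ → ℝ) (hσm : Measurable σ)
    (hσlip : ∀ s t : ℝ, |σ s - σ t| ≤ |s - t|)
    (hσhom : ∀ (α t : ℝ), 0 ≤ α → σ (α * t) = α * σ t)
    (μ : Measure (Cube d)) [IsProbabilityMeasure μ]
    (f : Cube d → ℝ) (γ : ℝ) (hγ : 0 ≤ γ)
    (π : Measure (Sphere1 d)) [IsProbabilityMeasure π]
    (a : Sphere1 d → ℝ) (ha : Measurable a) (ha2 : MemLp a 2 π)
    (hrep : ∀ x : Cube d, f x = ∫ w, a w * σ (∑ i, w.1 i * x.1 i) ∂π)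
    (hnorm : ∫ w, (a w) ^ 2 ∂π = γ ^ 2) :
    ∃ (c : Fin m → ℝ) (w : Fin m → Fin d → ℝ),
      (∫ x, (f x - ∑ k, c k * σ (∑ i, w k i * x.1 i)) ^ 2 ∂μ ≤ 3 * γ ^ 2 / m) ∧
      ∑ k, |c k| * ∑ i, |w k i| ≤ 2 * γ := by
  classical
  have hσ0 : σ 0 = 0 := by simpa using hσhom 0 0 le_rfl
  have hσbd : ∀ t : ℝ, |σ t| ≤ |t| := fun t => by simpa [hσ0] using hσlip t 0
  have hip : ∀ (w : Sphere1 d) (x : Cube d), |∑ i, w.1 i * x.1 i| ≤ 1 := by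
    intro w x
    calc |∑ i, w.1 i * x.1 i| ≤ ∑ i, |w.1 i * x.1 i| := Finset.abs_sum_le_sum_abs _ _
      _ ≤ ∑ i, |w.1 i| := Finset.sum_le_sum fun i _ => by
            rw [abs_mul]; exact mul_le_of_le_one_right (abs_nonneg _) (x.2 i)
      _ = 1 := w.2
  -- the case γ = 0
  rcases eq_or_lt_of_le hγ with hγ0 | hγpos
  · refine ⟨0, 0, ?_, ?_⟩ <;>
    · have hsqz : ∫ w, (a w) ^ 2 ∂π = 0 := by rw [hnorm, ← hγ0]; ring
      have haz : ∀ᵐ w ∂π, a w ^ 2 = 0 :=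
        (integral_eq_zero_iff_of_nonneg (fun w => sq_nonneg (a w)) ha2.integrable_sq).mp hsqz
      have hf0 : ∀ x, f x = 0 := by
        intro x
        rw [hrep x]
        apply integral_eq_zero_of_ae
        filter_upwards [haz] with w hw
        have : a w = 0 := by
          have := sq_eq_zero_iff.mp hw
          simpa using this
        simp [this]
      have hgoal1 : ∫ x, (f x - ∑ k : Fin m, (0 : Fin m → ℝ) k
          * σ (∑ i, (0 : Fin m → Fin d → ℝ) k i * x.1 i)) ^ 2 ∂μ ≤ 3 * γ ^ 2 / m := by
        simp only [Pi.zero_apply, zero_mul, Finset.sum_const_zero, sub_zero, hf0]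
        rw [show (3 * γ ^ 2 / m : ℝ) = 0 by rw [← hγ0]; ring]
        simp
      have hgoal2 : ∑ k : Fin m, |(0 : Fin m → ℝ) k|
          * ∑ i, |(0 : Fin m → Fin d → ℝ) k i| ≤ 2 * γ := by
        simp only [Pi.zero_apply, abs_zero, zero_mul, Finset.sum_const_zero]
        linarith
      first | exact hgoal1 | exact hgoal2
  -- main case: γ > 0
  · haveI hPMo : IsProbabilityMeasure (Measure.pi fun _ : Fin m => π) := inferInstance
    have hm' : (0:ℝ) < m := by exact_mod_cast hm
    set g : Sphere1 d → Cube d → ℝ := fun w x => a w * σ (∑ i, w.1 i * x.1 i) with hgdef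
    have hrepg : ∀ x, f x = ∫ w, g w x ∂π := hrep
    have hgbd : ∀ w x, |g w x| ≤ |a w| := fun w x => by
      rw [hgdef, abs_mul]
      exact mul_le_of_le_one_right (abs_nonneg _) ((hσbd _).trans (hip w x))
    -- measurability
    have mw : Measurable (fun w : Sphere1 d => (w.1 : Fin d → ℝ)) := measurable_subtype_coe
    have mx : Measurable (fun x : Cube d => (x.1 : Fin d → ℝ)) := measurable_subtype_coe
    have hgm : ∀ x, Measurable (fun w => g w x) := fun x =>
      ha.mul (hσm.comp (Finset.measurable_sum _ fun i _ =>
        ((measurable_pi_apply i).comp mw).mul_const _))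
    have hgm2 : Measurable (fun p : Cube d × Sphere1 d => g p.2 p.1) :=
      (ha.comp measurable_snd).mul (hσm.comp (Finset.measurable_sum _ fun i _ =>
        (((measurable_pi_apply i).comp (mw.comp measurable_snd)).mul
          ((measurable_pi_apply i).comp (mx.comp measurable_fst)))))
    have hfm : Measurable f := by
      have hfe : f = fun x => ∫ w, g w x ∂π := funext hrepg
      rw [hfe]
      exact hgm2.stronglyMeasurable.integral_prod_right'.measurable
    -- per-x L² facts
    have hgx2 : ∀ x, MemLp (fun w => g w x) 2 π := fun x =>
      MemLp.of_le ha2 (hgm x).aestronglyMeasurable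
        (Filter.Eventually.of_forall fun w => by
          simpa [Real.norm_eq_abs] using hgbd w x)
    have hgxint : ∀ x, Integrable (fun w => g w x) π := fun x => (hgx2 x).integrable one_le_two
    have hQint : ∀ x, Integrable (fun w => (g w x) ^ 2) π := fun x => (hgx2 x).integrable_sq
    have hQ : ∀ x, ∫ w, (g w x) ^ 2 ∂π ≤ γ ^ 2 := fun x => by
      rw [← hnorm]
      refine integral_mono (hQint x) ha2.integrable_sq fun w => ?_
      have h1 := hgbd w x
      nlinarith [abs_nonneg (a w), abs_nonneg (g w x), sq_abs (g w x), sq_abs (a w)]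
    -- Ω-level facts
    have hIk : ∀ (x) (k : Fin m), Integrable (fun W : Fin m → Sphere1 d => g (W k) x)
        (Measure.pi fun _ => π) := fun x k => pev_int π _ (hgxint x) k
    have hIk2 : ∀ (x) (k : Fin m), Integrable (fun W : Fin m → Sphere1 d => (g (W k) x) ^ 2)
        (Measure.pi fun _ => π) := fun x k => pev_int π _ (hQint x) k
    have hMk : ∀ (x) (k : Fin m),
        MemLp (fun W : Fin m → Sphere1 d => g (W k) x) 2 (Measure.pi fun _ => π) := fun x k =>
      (memLp_two_iff_integrable_sq
        ((hgm x).comp (measurable_pi_apply k)).aestronglyMeasurable).mpr (hIk2 x k)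
    have hS2 : ∀ x, MemLp (fun W : Fin m → Sphere1 d => ∑ k, g (W k) x) 2
        (Measure.pi fun _ => π) := fun x =>
      memLp_finset_sum _ fun k _ => hMk x k
    set D : (Fin m → Sphere1 d) → Cube d → ℝ :=
      fun W x => f x - (m:ℝ)⁻¹ * ∑ k, g (W k) x with hDdef
    have hD2 : ∀ x, MemLp (fun W => D W x) 2 (Measure.pi fun _ => π) := fun x =>
      (memLp_const _).sub ((hS2 x).const_mul _)
    have hD2int : ∀ x, Integrable (fun W => (D W x) ^ 2) (Measure.pi fun _ => π) :=
      fun x => (hD2 x).integrable_sq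
    -- per-x integral computations
    have hSint : ∀ x, ∫ W : Fin m → Sphere1 d, ∑ k, g (W k) x ∂(Measure.pi fun _ => π)
        = m * f x := by
      intro x
      rw [integral_finset_sum _ (fun k _ => hIk x k)]
      rw [Finset.sum_congr rfl fun k _ => pev_eq π (fun w => g w x) k]
      rw [Finset.sum_const, ← hrepg x]
      simp [mul_comm]
    have hpair : ∀ (x) (j k : Fin m),
        ∫ W : Fin m → Sphere1 d, g (W j) x * g (W k) x ∂(Measure.pi fun _ => π)
        = if j = k then ∫ w, (g w x) ^ 2 ∂π else (f x) ^ 2 := by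
      intro x j k
      by_cases hjk : j = k
      · subst hjk
        rw [if_pos rfl]
        have he : ∫ W : Fin m → Sphere1 d, g (W j) x * g (W j) x ∂(Measure.pi fun _ => π)
            = ∫ W : Fin m → Sphere1 d, (fun w => (g w x) ^ 2) (W j) ∂(Measure.pi fun _ => π) := by
          congr 1; funext W; exact (pow_two (g (W j) x)).symm
        rw [he]
        exact pev_eq π (fun w => (g w x) ^ 2) j
      · rw [if_neg hjk, sq, hrepg x]
        exact ppair_eq π (fun w => g w x) (fun w => g w x) hjk
    have hSsq : ∀ x, ∫ W : Fin m → Sphere1 d, (∑ k, g (W k) x) ^ 2 ∂(Measure.pi fun _ => π)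
        = m * ∫ w, (g w x) ^ 2 ∂π + ((m:ℝ) ^ 2 - m) * (f x) ^ 2 := by
      intro x
      have hint : ∀ j k : Fin m,
          Integrable (fun W : Fin m → Sphere1 d => g (W j) x * g (W k) x)
            (Measure.pi fun _ => π) := by
        intro j k
        by_cases hjk : j = k
        · subst hjk
          have := hIk2 x j
          simpa [sq] using this
        · exact ppair_int π _ _ (hgxint x) (hgxint x) hjk
      have expand : ∀ W : Fin m → Sphere1 d,
          (∑ k, g (W k) x) ^ 2 = ∑ j, ∑ k, g (W j) x * g (W k) x := fun W => by
        rw [sq, Finset.sum_mul_sum]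
      simp only [expand]
      rw [integral_finset_sum _ (fun j _ => integrable_finset_sum _ (fun k _ => hint j k))]
      rw [Finset.sum_congr rfl fun j _ =>
        integral_finset_sum Finset.univ (fun k (_ : k ∈ Finset.univ) => hint j k)]
      simp only [hpair x]
      have step : ∀ j : Fin m, ∑ k : Fin m,
          (if j = k then ∫ w, (g w x) ^ 2 ∂π else (f x) ^ 2)
          = (m:ℝ) * (f x) ^ 2 + ((∫ w, (g w x) ^ 2 ∂π) - (f x) ^ 2) := by
        intro j
        have hsplit : ∀ k : Fin m, (if j = k then ∫ w, (g w x) ^ 2 ∂π else (f x) ^ 2)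
            = (f x) ^ 2 + (if j = k then (∫ w, (g w x) ^ 2 ∂π) - (f x) ^ 2 else 0) := by
          intro k; by_cases h : j = k <;> simp [h]
        simp only [hsplit, Finset.sum_add_distrib, Finset.sum_const, Finset.card_univ,
          Fintype.card_fin, Finset.sum_ite_eq, Finset.mem_univ, if_true, nsmul_eq_mul]
      simp only [step, Finset.sum_const, Finset.card_univ, Fintype.card_fin, nsmul_eq_mul]
      ring
    have Tx : ∀ x, ∫ W : Fin m → Sphere1 d, (D W x) ^ 2 ∂(Measure.pi fun _ => π)
        ≤ γ ^ 2 / m := by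
      intro x
      have IS : Integrable (fun W : Fin m → Sphere1 d => ∑ k, g (W k) x)
          (Measure.pi fun _ => π) := integrable_finset_sum _ fun k _ => hIk x k
      have IS2 : Integrable (fun W : Fin m → Sphere1 d => (∑ k, g (W k) x) ^ 2)
          (Measure.pi fun _ => π) := (hS2 x).integrable_sq
      have expand2 : ∀ W : Fin m → Sphere1 d, (D W x) ^ 2
          = ((m:ℝ)⁻¹) ^ 2 * (∑ k, g (W k) x) ^ 2
            - (2 * f x * (m:ℝ)⁻¹) * (∑ k, g (W k) x) + (f x) ^ 2 := fun W => by
        rw [hDdef]; ring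
      simp only [expand2]
      have I1 : Integrable (fun W : Fin m → Sphere1 d =>
          ((m:ℝ)⁻¹) ^ 2 * (∑ k, g (W k) x) ^ 2) (Measure.pi fun _ => π) := IS2.const_mul _
      have I2 : Integrable (fun W : Fin m → Sphere1 d =>
          (2 * f x * (m:ℝ)⁻¹) * (∑ k, g (W k) x)) (Measure.pi fun _ => π) := IS.const_mul _
      have I12 : Integrable (fun W : Fin m → Sphere1 d =>
          ((m:ℝ)⁻¹) ^ 2 * (∑ k, g (W k) x) ^ 2
            - (2 * f x * (m:ℝ)⁻¹) * (∑ k, g (W k) x)) (Measure.pi fun _ => π) := I1.sub I2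
      rw [integral_add I12 (integrable_const _), integral_sub I1 I2,
        integral_const_mul, integral_const_mul, integral_const, hSsq x, hSint x]
      simp only [measure_univ, probReal_univ, ENNReal.toReal_one, smul_eq_mul, one_mul]
      have key : ((m:ℝ)⁻¹) ^ 2 * ((m:ℝ) * (∫ w, (g w x) ^ 2 ∂π) + ((m:ℝ) ^ 2 - m) * (f x) ^ 2)
          - 2 * f x * (m:ℝ)⁻¹ * ((m:ℝ) * f x) + (f x) ^ 2
          = ((∫ w, (g w x) ^ 2 ∂π) - (f x) ^ 2) / m := by
        field_simp
        ring
      rw [key]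
      have hle : (∫ w, (g w x) ^ 2 ∂π) - (f x) ^ 2 ≤ γ ^ 2 := by
        nlinarith [hQ x, sq_nonneg (f x)]
      gcongr
    -- joint measurability
    have hDm : Measurable (fun p : (Fin m → Sphere1 d) × Cube d => (D p.1 p.2) ^ 2) := by
      have hsum : Measurable (fun p : (Fin m → Sphere1 d) × Cube d => ∑ k, g (p.1 k) p.2) :=
        Finset.measurable_sum _ fun k _ =>
          (ha.comp ((measurable_pi_apply k).comp measurable_fst)).mul
            (hσm.comp (Finset.measurable_sum _ fun i _ =>
              ((measurable_pi_apply i).comp (mw.comp ((measurable_pi_apply k).comp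
                  measurable_fst))).mul
                ((measurable_pi_apply i).comp (mx.comp measurable_snd))))
      exact ((hfm.comp measurable_snd).sub (hsum.const_mul _)).pow_const 2
    have hDm1 : ∀ W, Measurable (fun x : Cube d => (D W x) ^ 2) := fun W =>
      hDm.comp (measurable_prodMk_left)
    have h1m : Measurable (fun W : Fin m → Sphere1 d =>
        ∫⁻ x, ENNReal.ofReal ((D W x) ^ 2) ∂μ) :=
      (ENNReal.measurable_ofReal.comp hDm).lintegral_prod_right'
    have hswap : ∫⁻ W, (∫⁻ x, ENNReal.ofReal ((D W x) ^ 2) ∂μ) ∂(Measure.pi fun _ => π)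
        ≤ ENNReal.ofReal (γ ^ 2 / m) := by
      have hjm : Measurable (Function.uncurry fun (W : Fin m → Sphere1 d) (x : Cube d) =>
          ENNReal.ofReal ((D W x) ^ 2)) := ENNReal.measurable_ofReal.comp hDm
      rw [lintegral_lintegral_swap hjm.aemeasurable]
      have hb : ∀ x, ∫⁻ W, ENNReal.ofReal ((D W x) ^ 2) ∂(Measure.pi fun _ => π)
          ≤ ENNReal.ofReal (γ ^ 2 / m) := fun x => by
        rw [← ofReal_integral_eq_lintegral_ofReal (hD2int x)
          (Filter.Eventually.of_forall fun W => sq_nonneg _)]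
        exact ENNReal.ofReal_le_ofReal (Tx x)
      calc ∫⁻ x, (∫⁻ W, ENNReal.ofReal ((D W x) ^ 2) ∂(Measure.pi fun _ => π)) ∂μ
          ≤ ∫⁻ _x, ENNReal.ofReal (γ ^ 2 / m) ∂μ := lintegral_mono hb
        _ = ENNReal.ofReal (γ ^ 2 / m) := by simp [measure_univ]
    -- path-norm expectation
    have habs_meas : Measurable (fun w : Sphere1 d => |a w|) := ha.abs
    have habs_int : Integrable (fun w : Sphere1 d => |a w|) π := (ha2.integrable one_le_two).abs
    have habs : ∫ w, |a w| ∂π ≤ γ := by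
      have hmem : MemLp (fun w : Sphere1 d => |a w|) 2 π :=
        MemLp.of_le ha2 habs_meas.aestronglyMeasurable
          (Filter.Eventually.of_forall fun w => by simp [Real.norm_eq_abs])
      have hvar := ProbabilityTheory.variance_nonneg (fun w : Sphere1 d => |a w|) π
      rw [ProbabilityTheory.variance_eq_sub hmem] at hvar
      have h2 : ∫ w, ((fun w : Sphere1 d => |a w|) ^ 2) w ∂π = γ ^ 2 := by
        simp only [Pi.pow_apply, sq_abs]
        exact hnorm
      have h0 : 0 ≤ ∫ w, |a w| ∂π := integral_nonneg fun w => abs_nonneg _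
      nlinarith [hvar, h2, h0, hγpos]
    have hsum_meas : Measurable (fun W : Fin m → Sphere1 d => ∑ k, |a (W k)|) :=
      Finset.measurable_sum _ fun k _ => (ha.comp (measurable_pi_apply k)).abs
    have hsum_int : Integrable (fun W : Fin m → Sphere1 d => ∑ k, |a (W k)|)
        (Measure.pi fun _ => π) := integrable_finset_sum _ fun k _ => pev_int π _ habs_int k
    have hsum_val : ∫ W : Fin m → Sphere1 d, ∑ k, |a (W k)| ∂(Measure.pi fun _ => π)
        = m * ∫ w, |a w| ∂π := by
      rw [integral_finset_sum _ (fun k _ => pev_int π _ habs_int k)]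
      have hcongr : ∑ k : Fin m, (∫ W : Fin m → Sphere1 d, |a (W k)| ∂(Measure.pi fun _ => π))
          = ∑ _k : Fin m, ∫ w, |a w| ∂π :=
        by refine Finset.sum_congr rfl fun k _ => ?_; exact pev_eq π (fun w => |a w|) k
      rw [hcongr]
      rw [Finset.sum_const]
      simp [mul_comm]
    have h2bound : ∫⁻ W : Fin m → Sphere1 d,
        ENNReal.ofReal (∑ k, |a (W k)|) ∂(Measure.pi fun _ => π)
        ≤ ENNReal.ofReal (m * γ) := by
      rw [← ofReal_integral_eq_lintegral_ofReal hsum_int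
        (Filter.Eventually.of_forall fun W => Finset.sum_nonneg fun k _ => abs_nonneg _)]
      refine ENNReal.ofReal_le_ofReal ?_
      rw [hsum_val]
      exact mul_le_mul_of_nonneg_left habs (by positivity)
    -- combine via Markov
    have hγ2 : (0:ℝ) < γ ^ 2 := by positivity
    set c1 : ℝ≥0∞ := ENNReal.ofReal ((m:ℝ) / (3 * γ ^ 2)) with hc1def
    set c2 : ℝ≥0∞ := ENNReal.ofReal (1 / (2 * m * γ)) with hc2def
    have hc1pos : (0:ℝ) < (m:ℝ) / (3 * γ ^ 2) := by positivity
    have hc2pos : (0:ℝ) < 1 / (2 * (m:ℝ) * γ) := by positivity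
    have hΦ : ∫⁻ W, ((∫⁻ x, ENNReal.ofReal ((D W x) ^ 2) ∂μ) * c1
        + ENNReal.ofReal (∑ k, |a (W k)|) * c2) ∂(Measure.pi fun _ => π)
        ≤ ENNReal.ofReal (5 / 6) := by
      rw [lintegral_add_left (h1m.mul_const _),
        lintegral_mul_const _ h1m,
        lintegral_mul_const _ (show Measurable fun W : Fin m → Sphere1 d =>
          ENNReal.ofReal (∑ k, |a (W k)|) from ENNReal.measurable_ofReal.comp hsum_meas)]
      refine le_trans (add_le_add (mul_le_mul_left hswap _)
        (mul_le_mul_left h2bound _)) ?_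
      have e1 : ENNReal.ofReal (γ ^ 2 / m) * c1 = ENNReal.ofReal (1/3) := by
        rw [hc1def, ← ENNReal.ofReal_mul (by positivity)]
        congr 1
        field_simp
      have e2 : ENNReal.ofReal ((m:ℝ) * γ) * c2 = ENNReal.ofReal (1/2) := by
        rw [hc2def, ← ENNReal.ofReal_mul (by positivity)]
        congr 1
        field_simp
      rw [e1, e2, ← ENNReal.ofReal_add (by norm_num) (by norm_num)]
      exact ENNReal.ofReal_le_ofReal (by norm_num)
    have hex : ∃ W : Fin m → Sphere1 d, (∫⁻ x, ENNReal.ofReal ((D W x) ^ 2) ∂μ) * c1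
        + ENNReal.ofReal (∑ k, |a (W k)|) * c2 < 1 := by
      by_contra hcon
      push_neg at hcon
      have hge : (1:ℝ≥0∞) ≤ ENNReal.ofReal (5 / 6) := by
        calc (1:ℝ≥0∞) = ∫⁻ _W, (1:ℝ≥0∞) ∂(Measure.pi fun _ : Fin m => π) := by
              simp [measure_univ]
          _ ≤ _ := lintegral_mono hcon
          _ ≤ ENNReal.ofReal (5 / 6) := hΦ
      have hlt : ENNReal.ofReal (5 / 6) < 1 := by
        rw [← ENNReal.ofReal_one]
        exact (ENNReal.ofReal_lt_ofReal_iff one_pos).mpr (by norm_num)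
      exact absurd (lt_of_le_of_lt hge hlt) (lt_irrefl _)
    obtain ⟨W, hW⟩ := hex
    have hA : (∫⁻ x, ENNReal.ofReal ((D W x) ^ 2) ∂μ) * c1 < 1 :=
      lt_of_le_of_lt le_self_add hW
    have hB : ENNReal.ofReal (∑ k, |a (W k)|) * c2 < 1 :=
      lt_of_le_of_lt le_add_self hW
    have hAbound : (∫⁻ x, ENNReal.ofReal ((D W x) ^ 2) ∂μ)
        ≤ ENNReal.ofReal (3 * γ ^ 2 / m) := by
      have hc1ne0 : c1 ≠ 0 := by
        rw [hc1def]; exact (ENNReal.ofReal_pos.mpr hc1pos).ne'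
      have h1 : (∫⁻ x, ENNReal.ofReal ((D W x) ^ 2) ∂μ) < 1 / c1 :=
        (ENNReal.lt_div_iff_mul_lt (Or.inl hc1ne0) (Or.inl ENNReal.ofReal_ne_top)).mpr hA
      have h2 : (1:ℝ≥0∞) / c1 = ENNReal.ofReal (3 * γ ^ 2 / m) := by
        rw [hc1def, one_div, ← ENNReal.ofReal_inv_of_pos hc1pos]
        congr 1
        rw [inv_div]
      rw [h2] at h1
      exact h1.le
    have hBbound : (∑ k, |a (W k)|) < 2 * m * γ := by
      have hc2ne0 : c2 ≠ 0 := by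
        rw [hc2def]; exact (ENNReal.ofReal_pos.mpr hc2pos).ne'
      have h1 : ENNReal.ofReal (∑ k, |a (W k)|) < 1 / c2 :=
        (ENNReal.lt_div_iff_mul_lt (Or.inl hc2ne0) (Or.inl ENNReal.ofReal_ne_top)).mpr hB
      have h2 : (1:ℝ≥0∞) / c2 = ENNReal.ofReal (2 * m * γ) := by
        rw [hc2def, one_div, ← ENNReal.ofReal_inv_of_pos hc2pos]
        congr 1
        rw [one_div, inv_inv]
      rw [h2] at h1
      exact (ENNReal.ofReal_lt_ofReal_iff (by positivity)).mp h1
    -- conclusion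
    refine ⟨fun k => a (W k) / m, fun k => (W k).1, ?_, ?_⟩
    · have hfun : ∀ x : Cube d, f x - ∑ k, (a (W k) / m) * σ (∑ i, (W k).1 i * x.1 i)
          = D W x := by
        intro x
        rw [hDdef]
        simp only
        rw [Finset.mul_sum]
        refine congrArg (fun t => f x - t) ?_
        refine Finset.sum_congr rfl fun k _ => ?_
        rw [hgdef]
        simp only
        ring
      simp only [hfun]
      rw [integral_eq_lintegral_of_nonneg_ae
        (Filter.Eventually.of_forall fun x => sq_nonneg _)
        (hDm1 W).aestronglyMeasurable]
      exact ENNReal.toReal_le_of_le_ofReal (by positivity) hAbound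
    · have hwk : ∀ k : Fin m, ∑ i, |(W k).1 i| = 1 := fun k => (W k).2
      calc ∑ k, |a (W k) / (m:ℝ)| * ∑ i, |(W k).1 i| = ∑ k, |a (W k)| / m := by
            refine Finset.sum_congr rfl fun k _ => ?_
            rw [hwk k, mul_one, abs_div, Nat.abs_cast]
        _ = (∑ k, |a (W k)|) / m := by rw [Finset.sum_div]
        _ ≤ (2 * m * γ) / m := by gcongr
        _ = 2 * γ := by field_simp
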